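/- The master relation holds: for every u ∈ ℂ, T_M(u) · (χ + u·𝕊·χ) = (χ − u·𝕊·χ) · T_M(u). -/
import Mathlib


namespace FFDAux

variable {A : Type*} [Ring A]

/-- ordered product of generators over a finset of vertex codes -/
def PF (g : ℕ → A) (S : Finset ℕ) : A := ((S.sort (· ≤ ·)).map g).prod

@[simp] lemma PF_empty (g : ℕ → A) : PF g (∅ : Finset ℕ) = 1 := by
  simp [PF]

lemma pairwise_commute_of_forall {g : ℕ → A} {l : List ℕ}
    (h : ∀ a ∈ l, ∀ b ∈ l, Commute (g a) (g b)) :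
    (l.map g).Pairwise Commute := by
  rw [List.pairwise_map]
  induction l with
  | nil => simp
  | cons a t ih =>
    refine List.Pairwise.cons (fun b hb => h a (by simp) b (by simp [hb])) (ih ?_)
    exact fun x hx y hy => h x (by simp [hx]) y (by simp [hy])

lemma PF_insert {g : ℕ → A} {S : Finset ℕ} {v : ℕ} (hv : v ∉ S)
    (hcomm : ∀ w ∈ insert v S, ∀ w' ∈ insert v S, Commute (g w) (g w')) :
    PF g (insert v S) = g v * PF g S := by
  have hperm : ((insert v S).sort (· ≤ ·)).Perm (v :: S.sort (· ≤ ·)) := by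
    refine ((Finset.sort_perm_toList _ _).trans ((Finset.toList_insert hv).trans ?_))
    exact List.Perm.cons _ (Finset.sort_perm_toList _ _).symm
  have hpair : (((insert v S).sort (· ≤ ·)).map g).Pairwise Commute := by
    apply pairwise_commute_of_forall
    intro a ha b hb
    exact hcomm a (by simpa using (Finset.mem_sort (α := ℕ) (· ≤ ·)).mp ha)
      b (by simpa using (Finset.mem_sort (α := ℕ) (· ≤ ·)).mp hb)
  have := List.Perm.prod_eq' (hperm.map g) hpair
  simpa [PF] using this

/-- moving an element `x` through the ordered product picks up a sign for each
anticommuting factor. -/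
lemma move_PF {g : ℕ → A} (x : A) (B : ℕ → Prop) [DecidablePred B] :
    ∀ (S : Finset ℕ),
      (∀ w ∈ S, ∀ w' ∈ S, Commute (g w) (g w')) →
      (∀ w ∈ S, B w → x * g w = -(g w * x)) →
      (∀ w ∈ S, ¬ B w → x * g w = g w * x) →
      x * PF g S = (-1 : A) ^ (S.filter B).card * (PF g S * x) := by
  intro S
  induction S using Finset.induction_on with
  | empty => simp
  | @insert v S hvS ih =>
    intro hcomm hanti hcm
    rw [PF_insert hvS hcomm]
    have ih' := ih (fun w hw w' hw' => hcomm w (by simp [hw]) w' (by simp [hw']))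
      (fun w hw hB => hanti w (by simp [hw]) hB)
      (fun w hw hB => hcm w (by simp [hw]) hB)
    have hfi : ((insert v S).filter B).card
        = (S.filter B).card + (if B v then 1 else 0) := by
      rw [Finset.filter_insert]
      split
      · rw [Finset.card_insert_of_notMem (by simp [hvS])]
      · rfl
    by_cases hBv : B v
    · have hx : x * g v = -(g v * x) := hanti v (by simp) hBv
      have hc : Commute ((-1 : A) ^ (S.filter B).card) (g v) :=
        (Commute.neg_one_left (g v)).pow_left _
      calc x * (g v * PF g S) = (x * g v) * PF g S := by rw [mul_assoc]
        _ = -((g v * x) * PF g S) := by rw [hx, neg_mul]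
        _ = -(g v * (x * PF g S)) := by rw [mul_assoc]
        _ = -(g v * ((-1 : A) ^ (S.filter B).card * (PF g S * x))) := by rw [ih']
        _ = (-1 : A) ^ ((insert v S).filter B).card * (g v * PF g S * x) := by
            rw [hfi, if_pos hBv, Commute.left_comm hc.symm, pow_succ]
            simp [mul_assoc]
    · have hx : x * g v = g v * x := hcm v (by simp) hBv
      have hc : Commute ((-1 : A) ^ (S.filter B).card) (g v) :=
        (Commute.neg_one_left (g v)).pow_left _
      calc x * (g v * PF g S) = (x * g v) * PF g S := by rw [mul_assoc]
        _ = g v * (x * PF g S) := by rw [hx, mul_assoc]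
        _ = g v * ((-1 : A) ^ (S.filter B).card * (PF g S * x)) := by rw [ih']
        _ = (-1 : A) ^ ((insert v S).filter B).card * (g v * PF g S * x) := by
            rw [hfi, if_neg hBv, Commute.left_comm hc.symm]
            simp [mul_assoc]

end FFDAux

namespace FFDAux2
open FFDAux

variable {A : Type*} [Ring A]

structure Ctx (g : ℕ → A) (Adj' : ℕ → ℕ → Prop) (V K : Finset ℕ) (χ : A) : Prop where
  symm : ∀ v w, Adj' v w → Adj' w v
  irrefl : ∀ v, ¬ Adj' v v
  anti : ∀ v ∈ V, ∀ w ∈ V, Adj' v w → g v * g w = -(g w * g v)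
  comm : ∀ v ∈ V, ∀ w ∈ V, v ≠ w → ¬ Adj' v w → g v * g w = g w * g v
  KV : K ⊆ V
  clique : ∀ v ∈ K, ∀ w ∈ K, v ≠ w → Adj' v w
  simpl : ∀ v ∈ K, ∀ w1 ∈ V, ∀ w2 ∈ V, w1 ∉ K → w2 ∉ K → w1 ≠ w2 →
      Adj' v w1 → Adj' v w2 → Adj' w1 w2
  chiK : ∀ v ∈ K, χ * g v = -(g v * χ)
  chiV : ∀ v ∈ V, v ∉ K → χ * g v = g v * χ

variable {g : ℕ → A} {Adj' : ℕ → ℕ → Prop} {V K : Finset ℕ} {χ : A}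

/-- independence predicate -/
def Ind (Adj' : ℕ → ℕ → Prop) (V S : Finset ℕ) : Prop :=
  (∀ v ∈ S, v ∈ V) ∧ ∀ v ∈ S, ∀ w ∈ S, v ≠ w → ¬ Adj' v w

lemma commute_of_ind (ctx : Ctx g Adj' V K χ) {S : Finset ℕ} (hS : Ind Adj' V S) :
    ∀ w ∈ S, ∀ w' ∈ S, Commute (g w) (g w') := by
  intro w hw w' hw'
  rcases eq_or_ne w w' with rfl | hne
  · exact Commute.refl _
  · exact ctx.comm w (hS.1 w hw) w' (hS.1 w' hw') hne (hS.2 w hw w' hw' hne)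

lemma PF_insert_ind (ctx : Ctx g Adj' V K χ) {S : Finset ℕ} {v : ℕ}
    (hS : Ind Adj' V (insert v S)) (hv : v ∉ S) :
    PF g (insert v S) = g v * PF g S := by
  refine PF_insert hv (commute_of_ind ctx hS)

lemma interK_eq_singleton (ctx : Ctx g Adj' V K χ) {S : Finset ℕ}
    (hS : Ind Adj' V S) (hne : (S ∩ K).Nonempty) : ∃ w0, S ∩ K = {w0} := by
  obtain ⟨w0, hw0⟩ := hne
  refine ⟨w0, Finset.eq_singleton_iff_unique_mem.2 ⟨hw0, ?_⟩⟩
  intro w hw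
  by_contra hne'
  have h1 := Finset.mem_inter.1 hw0
  have h2 := Finset.mem_inter.1 hw
  exact hS.2 w h2.1 w0 h1.1 hne' (ctx.clique w h2.2 w0 h1.2 hne')

lemma chi_move (ctx : Ctx g Adj' V K χ) {S : Finset ℕ} (hS : Ind Adj' V S) :
    χ * PF g S = (-1 : A) ^ (S ∩ K).card * (PF g S * χ) := by
  classical
  have := move_PF (g := g) χ (fun w => w ∈ K) S (commute_of_ind ctx hS)
    (fun w hw hB => ctx.chiK w hB) (fun w hw hB => ctx.chiV w (hS.1 w hw) hB)
  rwa [Finset.filter_mem_eq_inter] at this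

lemma chi_comm_PF (ctx : Ctx g Adj' V K χ) {S : Finset ℕ} (hS : Ind Adj' V S)
    (h : S ∩ K = ∅) : χ * PF g S = PF g S * χ := by
  have := chi_move ctx hS
  rwa [h, Finset.card_empty, pow_zero, one_mul] at this

lemma chi_anti_PF (ctx : Ctx g Adj' V K χ) {S : Finset ℕ} (hS : Ind Adj' V S)
    (h : (S ∩ K).Nonempty) : χ * PF g S = -(PF g S * χ) := by
  obtain ⟨w0, hw0⟩ := interK_eq_singleton ctx hS h
  have := chi_move ctx hS
  rwa [hw0, Finset.card_singleton, pow_one, neg_one_mul] at this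

lemma gv_move (ctx : Ctx g Adj' V K χ) {S : Finset ℕ} (hS : Ind Adj' V S)
    {v : ℕ} (hv : v ∈ V) [DecidablePred (Adj' v)] :
    g v * PF g S = (-1 : A) ^ (S.filter (Adj' v)).card * (PF g S * g v) := by
  refine move_PF (g := g) (g v) (Adj' v) S (commute_of_ind ctx hS) ?_ ?_
  · intro w hw hB
    exact ctx.anti v hv w (hS.1 w hw) hB
  · intro w hw hB
    rcases eq_or_ne v w with rfl | hne
    · rfl
    · exact ctx.comm v hv w (hS.1 w hw) hne hB

/-- the summand attached to a pair `(S, v)` -/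
noncomputable def Fop (g : ℕ → A) (K : Finset ℕ) (x : Finset ℕ × ℕ) : A :=
  PF g x.1 * g x.2 +
    (if (x.1 ∩ K).Nonempty then -(g x.2 * PF g x.1) else g x.2 * PF g x.1)

lemma ind_mono {S S' : Finset ℕ} (hS : Ind Adj' V S) (hsub : S' ⊆ S) :
    Ind Adj' V S' :=
  ⟨fun v hv => hS.1 v (hsub hv), fun v hv w hw hne => hS.2 v (hsub hv) w (hsub hw) hne⟩

lemma flip_eq_neg {a b : A} (h : a = -b) : b = -a := by rw [h, neg_neg]

/-- good pairs: `v ∉ S` commutes with everything in `S`. -/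
lemma Fop_good (ctx : Ctx g Adj' V K χ) {S : Finset ℕ} {v : ℕ}
    (hS : Ind Adj' V S) (hv : v ∈ K) (hvS : v ∉ S) (hgd : ∀ w ∈ S, ¬ Adj' v w) :
    Fop g K (S, v) = PF g (insert v S) + PF g (insert v S) ∧ S ∩ K = ∅
      ∧ Ind Adj' V (insert v S) := by
  classical
  have hSK : S ∩ K = ∅ := by
    ext w
    simp only [Finset.mem_inter, Finset.notMem_empty, iff_false, not_and]
    intro hwS hwK
    exact hgd w hwS (ctx.clique v hv w hwK (fun h => hvS (h ▸ hwS)))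
  have hind : Ind Adj' V (insert v S) := by
    constructor
    · intro w hw
      rcases Finset.mem_insert.1 hw with rfl | hw
      · exact ctx.KV hv
      · exact hS.1 w hw
    · intro a ha c hc hne had
      rcases Finset.mem_insert.1 ha with ha1 | ha1 <;>
        rcases Finset.mem_insert.1 hc with hc1 | hc1
      · exact hne (ha1.trans hc1.symm)
      · subst ha1; exact hgd c hc1 had
      · subst hc1; exact hgd a ha1 (ctx.symm _ _ had)
      · exact hS.2 a ha1 c hc1 hne had
  have hfil : S.filter (Adj' v) = ∅ := by
    ext w
    simp only [Finset.mem_filter, Finset.notMem_empty, iff_false, not_and]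
    exact fun hw => hgd w hw
  have hmv := gv_move ctx hS (ctx.KV hv) (v := v)
  rw [hfil, Finset.card_empty, pow_zero, one_mul] at hmv
  have : Fop g K (S, v) = PF g S * g v + g v * PF g S := by
    simp [Fop, hSK]
  rw [this, ← hmv, PF_insert_ind ctx hind hvS, hmv]
  exact ⟨rfl, hSK, hind⟩

/-- bad pairs which are not of leftover type give `0`. -/
lemma Fop_zero (ctx : Ctx g Adj' V K χ) {S : Finset ℕ} {v : ℕ}
    (hS : Ind Adj' V S) (hv : v ∈ K)
    (hbad : ¬ (v ∉ S ∧ ∀ w ∈ S, ¬ Adj' v w))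
    (hnC : ¬ (v ∉ S ∧ (S ∩ K).Nonempty ∧ ∀ w ∈ S, Adj' v w → w ∈ K)) :
    Fop g K (S, v) = 0 := by
  classical
  by_cases hvS : v ∈ S
  · -- `v ∈ S`: the two terms cancel
    have hne : (S ∩ K).Nonempty := ⟨v, Finset.mem_inter.2 ⟨hvS, hv⟩⟩
    have hfil : S.filter (Adj' v) = ∅ := by
      ext w
      simp only [Finset.mem_filter, Finset.notMem_empty, iff_false, not_and]
      intro hw hadj
      rcases eq_or_ne v w with rfl | hne'
      · exact ctx.irrefl v hadj
      · exact hS.2 v hvS w hw hne' hadj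
    have hmv := gv_move ctx hS (ctx.KV hv) (v := v)
    rw [hfil, Finset.card_empty, pow_zero, one_mul] at hmv
    simp [Fop, hne, ← hmv]
  · have hex : ∃ w ∈ S, Adj' v w := by
      by_contra hno
      push_neg at hno
      exact hbad ⟨hvS, hno⟩
    obtain ⟨w, hwS, hwadj⟩ := hex
    by_cases hne : (S ∩ K).Nonempty
    · -- there must be a neighbour outside `K`; then j = 2
      have hex1 : ∃ w1 ∈ S, Adj' v w1 ∧ w1 ∉ K := by
        by_contra hno
        push_neg at hno
        exact hnC ⟨hvS, hne, fun w' hw' ha' => hno w' hw' ha'⟩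
      obtain ⟨w1, hw1S, hw1adj, hw1K⟩ := hex1
      obtain ⟨w0, hw0⟩ := interK_eq_singleton ctx hS hne
      have hw0i : w0 ∈ S ∩ K := hw0 ▸ Finset.mem_singleton_self w0
      have hw0S : w0 ∈ S := (Finset.mem_inter.1 hw0i).1
      have hw0K : w0 ∈ K := (Finset.mem_inter.1 hw0i).2
      have hvw0 : v ≠ w0 := fun h => hvS (h ▸ hw0S)
      have hadj0 : Adj' v w0 := ctx.clique v hv w0 hw0K hvw0
      have hw0w1 : w0 ≠ w1 := fun h => hw1K (h ▸ hw0K)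
      have hfil : S.filter (Adj' v) = {w0, w1} := by
        ext z
        simp only [Finset.mem_filter, Finset.mem_insert, Finset.mem_singleton]
        constructor
        · rintro ⟨hzS, hzadj⟩
          by_cases hzK : z ∈ K
          · left
            have : z ∈ S ∩ K := Finset.mem_inter.2 ⟨hzS, hzK⟩
            rw [hw0] at this
            exact Finset.mem_singleton.1 this
          · right
            by_contra hzw1
            exact hS.2 z hzS w1 hw1S hzw1
              (ctx.simpl v hv z (hS.1 z hzS) w1 (hS.1 w1 hw1S) hzK hw1K hzw1 hzadj hw1adj)
        · rintro (rfl | rfl)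
          · exact ⟨hw0S, hadj0⟩
          · exact ⟨hw1S, hw1adj⟩
      have hcard : (S.filter (Adj' v)).card = 2 := by
        rw [hfil]
        rw [Finset.card_insert_of_notMem (by simp [hw0w1]), Finset.card_singleton]
      have hmv := gv_move ctx hS (ctx.KV hv) (v := v)
      rw [hcard, neg_one_sq, one_mul] at hmv
      simp [Fop, hne, ← hmv]
    · -- `S ∩ K = ∅`; then j = 1
      have hfil : S.filter (Adj' v) = {w} := by
        ext z
        simp only [Finset.mem_filter, Finset.mem_singleton]
        constructor
        · rintro ⟨hzS, hzadj⟩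
          by_contra hzw
          have hzK : z ∉ K := fun hzK => hne ⟨z, Finset.mem_inter.2 ⟨hzS, hzK⟩⟩
          have hwK : w ∉ K := fun hwK => hne ⟨w, Finset.mem_inter.2 ⟨hwS, hwK⟩⟩
          exact hS.2 z hzS w hwS hzw
            (ctx.simpl v hv z (hS.1 z hzS) w (hS.1 w hwS) hzK hwK hzw hzadj hwadj)
        · rintro rfl
          exact ⟨hwS, hwadj⟩
      have hmv := gv_move ctx hS (ctx.KV hv) (v := v)
      rw [hfil, Finset.card_singleton, pow_one, neg_one_mul] at hmv
      have h2 : PF g S * g v = -(g v * PF g S) := flip_eq_neg hmv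
      simp only [Fop, hne, if_neg hne, h2]
      exact neg_add_cancel _

lemma leftover_facts (ctx : Ctx g Adj' V K χ) {S : Finset ℕ} {v : ℕ}
    (hS : Ind Adj' V S) (hv : v ∈ K) (hC1 : v ∉ S) (hC2 : (S ∩ K).Nonempty)
    (hC3 : ∀ w ∈ S, Adj' v w → w ∈ K) :
    ∃ w0, S ∩ K = {w0} ∧ (∀ hpf : (S ∩ K).Nonempty, (S ∩ K).min' hpf = w0) ∧
      w0 ∈ K ∧ w0 ∈ S ∧ w0 ≠ v ∧
      Adj' w0 v ∧
      Ind Adj' V (insert v (S.erase w0)) ∧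
      (insert v (S.erase w0)).card = S.card ∧
      (insert v (S.erase w0)) ∩ K = {v} ∧
      (v ∉ S.erase w0) ∧
      Fop g K (S, v) = -(g v * PF g S) + -(g v * PF g S) ∧
      g w0 * PF g (insert v (S.erase w0)) = -(g v * PF g S) ∧
      Fop g K (insert v (S.erase w0), w0)
        = -(g w0 * PF g (insert v (S.erase w0)))
          + -(g w0 * PF g (insert v (S.erase w0))) ∧
      (w0 ∉ insert v (S.erase w0) ∧ ((insert v (S.erase w0)) ∩ K).Nonempty ∧
        ∀ w ∈ insert v (S.erase w0), Adj' w0 w → w ∈ K) := by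
  classical
  obtain ⟨w0, hw0⟩ := interK_eq_singleton ctx hS hC2
  have hw0i : w0 ∈ S ∩ K := hw0 ▸ Finset.mem_singleton_self w0
  have hw0S : w0 ∈ S := (Finset.mem_inter.1 hw0i).1
  have hw0K : w0 ∈ K := (Finset.mem_inter.1 hw0i).2
  have hw0v : w0 ≠ v := fun h => hC1 (h ▸ hw0S)
  have hmin : ∀ hpf : (S ∩ K).Nonempty, (S ∩ K).min' hpf = w0 := by
    intro hpf
    have h1 := Finset.min'_mem (S ∩ K) hpf
    have h2 : (S ∩ K).min' hpf ∈ ({w0} : Finset ℕ) := by rw [← hw0]; exact h1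
    exact Finset.mem_singleton.1 h2
  have hadjvw0 : Adj' v w0 := ctx.clique v hv w0 hw0K (Ne.symm hw0v)
  have hadjw0v : Adj' w0 v := ctx.symm _ _ hadjvw0
  have hvE : v ∉ S.erase w0 := fun h => hC1 (Finset.mem_of_mem_erase h)
  have hErase : Ind Adj' V (S.erase w0) := ind_mono hS (Finset.erase_subset _ _)
  have hgdE : ∀ w ∈ S.erase w0, ¬ Adj' v w := by
    intro w hw hadj
    have hwS : w ∈ S := Finset.mem_of_mem_erase hw
    have hwK : w ∈ K := hC3 w hwS hadj
    have : w ∈ S ∩ K := Finset.mem_inter.2 ⟨hwS, hwK⟩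
    rw [hw0] at this
    exact (Finset.ne_of_mem_erase hw) (Finset.mem_singleton.1 this)
  have hIndS'' : Ind Adj' V (insert v (S.erase w0)) := by
    constructor
    · intro w hw
      rcases Finset.mem_insert.1 hw with hw1 | hw1
      · exact hw1 ▸ ctx.KV hv
      · exact hErase.1 w hw1
    · intro a ha c hc hne had
      rcases Finset.mem_insert.1 ha with ha1 | ha1 <;>
        rcases Finset.mem_insert.1 hc with hc1 | hc1
      · exact hne (ha1.trans hc1.symm)
      · subst ha1; exact hgdE c hc1 had
      · subst hc1; exact hgdE a ha1 (ctx.symm _ _ had)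
      · exact hErase.2 a ha1 c hc1 hne had
  have hcardS : 1 ≤ S.card := Finset.card_pos.2 ⟨w0, hw0S⟩
  have hcard : (insert v (S.erase w0)).card = S.card := by
    rw [Finset.card_insert_of_notMem hvE, Finset.card_erase_of_mem hw0S]
    omega
  have hSK'' : (insert v (S.erase w0)) ∩ K = {v} := by
    ext z
    simp only [Finset.mem_inter, Finset.mem_insert, Finset.mem_singleton]
    constructor
    · rintro ⟨hz1 | hz1, hzK⟩
      · exact hz1
      · exfalso
        have : z ∈ S ∩ K := Finset.mem_inter.2 ⟨Finset.mem_of_mem_erase hz1, hzK⟩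
        rw [hw0] at this
        exact (Finset.ne_of_mem_erase hz1) (Finset.mem_singleton.1 this)
    · rintro rfl
      exact ⟨Or.inl rfl, hv⟩
  -- value of Fop at (S, v)
  have hfil : S.filter (Adj' v) = {w0} := by
    ext z
    simp only [Finset.mem_filter, Finset.mem_singleton]
    constructor
    · rintro ⟨hzS, hzadj⟩
      have : z ∈ S ∩ K := Finset.mem_inter.2 ⟨hzS, hC3 z hzS hzadj⟩
      rw [hw0] at this
      exact Finset.mem_singleton.1 this
    · rintro rfl
      exact ⟨hw0S, hadjvw0⟩
  have hmv := gv_move ctx hS (ctx.KV hv) (v := v)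
  rw [hfil, Finset.card_singleton, pow_one, neg_one_mul] at hmv
  have hflip : PF g S * g v = -(g v * PF g S) := flip_eq_neg hmv
  have hFval : Fop g K (S, v) = -(g v * PF g S) + -(g v * PF g S) := by
    simp only [Fop, if_pos hC2, hflip]
  -- the product relation
  have hSrw : insert w0 (S.erase w0) = S := Finset.insert_erase hw0S
  have hPS : PF g S = g w0 * PF g (S.erase w0) := by
    conv_lhs => rw [← hSrw]
    exact PF_insert_ind ctx (by rw [hSrw]; exact hS) (Finset.notMem_erase _ _)
  have hPS'' : PF g (insert v (S.erase w0)) = g v * PF g (S.erase w0) :=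
    PF_insert_ind ctx hIndS'' hvE
  have hanti : g w0 * g v = -(g v * g w0) :=
    ctx.anti w0 (ctx.KV hw0K) v (ctx.KV hv) hadjw0v
  have hcancel : g w0 * PF g (insert v (S.erase w0)) = -(g v * PF g S) := by
    rw [hPS'', hPS, ← mul_assoc, ← mul_assoc, hanti, neg_mul]
  have hne'' : ((insert v (S.erase w0)) ∩ K).Nonempty := by
    rw [hSK'']
    exact ⟨v, Finset.mem_singleton_self v⟩
  have hfil'' : (insert v (S.erase w0)).filter (Adj' w0) = {v} := by
    ext z
    simp only [Finset.mem_filter, Finset.mem_singleton]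
    constructor
    · rintro ⟨hz, hadj⟩
      rcases Finset.mem_insert.1 hz with hz1 | hz1
      · exact hz1
      · exact absurd hadj (hS.2 w0 hw0S z (Finset.mem_of_mem_erase hz1)
          (Ne.symm (Finset.ne_of_mem_erase hz1)))
    · rintro rfl
      exact ⟨Finset.mem_insert_self _ _, hadjw0v⟩
  have hmv'' := gv_move ctx hIndS'' (ctx.KV hw0K) (v := w0)
  rw [hfil'', Finset.card_singleton, pow_one, neg_one_mul] at hmv''
  have hflip'' : PF g (insert v (S.erase w0)) * g w0
      = -(g w0 * PF g (insert v (S.erase w0))) := flip_eq_neg hmv''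
  have hFval'' : Fop g K (insert v (S.erase w0), w0)
      = -(g w0 * PF g (insert v (S.erase w0)))
        + -(g w0 * PF g (insert v (S.erase w0))) := by
    simp only [Fop, if_pos hne'', hflip'']
  have hC'' : w0 ∉ insert v (S.erase w0) ∧ ((insert v (S.erase w0)) ∩ K).Nonempty ∧
      ∀ w ∈ insert v (S.erase w0), Adj' w0 w → w ∈ K := by
    refine ⟨?_, hne'', ?_⟩
    · intro hmem
      rcases Finset.mem_insert.1 hmem with h | h
      · exact hw0v h
      · exact (Finset.ne_of_mem_erase h) rfl
    · intro w hw hadj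
      rcases Finset.mem_insert.1 hw with rfl | hw1
      · exact hv
      · exact absurd hadj (hS.2 w0 hw0S w (Finset.mem_of_mem_erase hw1)
          (Ne.symm (Finset.ne_of_mem_erase hw1)))
  exact ⟨w0, hw0, hmin, hw0K, hw0S, hw0v, hadjw0v, hIndS'', hcard, hSK'', hvE,
    hFval, hcancel, hFval'', hC''⟩

theorem key_identity (ctx : Ctx g Adj' V K χ) (I : ℕ → Finset (Finset ℕ))
    (hI : ∀ k S, S ∈ I k ↔ S.card = k ∧ Ind Adj' V S) (k : ℕ) :
    (∑ S ∈ I (k+1), PF g S) * χ - χ * ∑ S ∈ I (k+1), PF g S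
      = (∑ S ∈ I k, PF g S) * ((∑ v ∈ K, g v) * χ)
        + ((∑ v ∈ K, g v) * χ) * ∑ S ∈ I k, PF g S := by
  classical
  -- step 1 : LHS as a sum over independent sets meeting K
  have step1 : (∑ S ∈ I (k+1), PF g S) * χ - χ * ∑ S ∈ I (k+1), PF g S
      = ∑ S ∈ (I (k+1)).filter (fun S => (S ∩ K).Nonempty), ((PF g S + PF g S) * χ) := by
    rw [Finset.sum_mul, Finset.mul_sum, ← Finset.sum_sub_distrib,
      ← Finset.sum_filter_add_sum_filter_not (I (k+1)) (fun S => (S ∩ K).Nonempty)]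
    have hzero : ∑ S ∈ (I (k+1)).filter (fun S => ¬ (S ∩ K).Nonempty),
        (PF g S * χ - χ * PF g S) = 0 := by
      apply Finset.sum_eq_zero
      intro S hS
      obtain ⟨hmem, hne⟩ := Finset.mem_filter.1 hS
      have hind := ((hI _ _).1 hmem).2
      have hempty : S ∩ K = ∅ := Finset.not_nonempty_iff_eq_empty.1 hne
      rw [chi_comm_PF ctx hind hempty, sub_self]
    rw [hzero, add_zero]
    apply Finset.sum_congr rfl
    intro S hS
    obtain ⟨hmem, hne⟩ := Finset.mem_filter.1 hS
    have hind := ((hI _ _).1 hmem).2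
    rw [chi_anti_PF ctx hind hne, sub_neg_eq_add, add_mul]
  -- step 3 : RHS as the pair sum
  have step3 : (∑ S ∈ I k, PF g S) * ((∑ v ∈ K, g v) * χ)
        + ((∑ v ∈ K, g v) * χ) * ∑ S ∈ I k, PF g S
      = ∑ x ∈ (I k) ×ˢ K, (Fop g K x * χ) := by
    rw [Finset.sum_product, Finset.sum_mul, Finset.mul_sum, ← Finset.sum_add_distrib]
    apply Finset.sum_congr rfl
    intro S hS
    have hind := ((hI _ _).1 hS).2
    by_cases hne : (S ∩ K).Nonempty
    · have hanti := chi_anti_PF ctx hind hne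
      calc PF g S * ((∑ v ∈ K, g v) * χ) + (∑ v ∈ K, g v) * χ * PF g S
          = PF g S * ((∑ v ∈ K, g v) * χ) + (∑ v ∈ K, g v) * (χ * PF g S) := by
            rw [mul_assoc]
        _ = PF g S * (∑ v ∈ K, g v * χ) + -((∑ v ∈ K, g v) * (PF g S * χ)) := by
            rw [hanti, mul_neg, Finset.sum_mul]
        _ = ∑ v ∈ K, (PF g S * (g v * χ)) + -(∑ v ∈ K, g v * (PF g S * χ)) := by
            rw [Finset.mul_sum, Finset.sum_mul]
        _ = ∑ v ∈ K, (Fop g K (S, v) * χ) := by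
            simp only [Fop, if_pos hne, add_mul, neg_mul, mul_assoc,
              Finset.sum_add_distrib, Finset.sum_neg_distrib]
    · have hcm := chi_comm_PF ctx hind (Finset.not_nonempty_iff_eq_empty.1 hne)
      calc PF g S * ((∑ v ∈ K, g v) * χ) + (∑ v ∈ K, g v) * χ * PF g S
          = PF g S * ((∑ v ∈ K, g v) * χ) + (∑ v ∈ K, g v) * (χ * PF g S) := by
            rw [mul_assoc]
        _ = PF g S * (∑ v ∈ K, g v * χ) + (∑ v ∈ K, g v) * (PF g S * χ) := by
            rw [hcm, Finset.sum_mul]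
        _ = ∑ v ∈ K, (PF g S * (g v * χ)) + ∑ v ∈ K, g v * (PF g S * χ) := by
            rw [Finset.mul_sum, Finset.sum_mul]
        _ = ∑ v ∈ K, (Fop g K (S, v) * χ) := by
            simp only [Fop, if_neg hne, add_mul, mul_assoc, Finset.sum_add_distrib]
  -- step 2 : evaluation of the pair sum
  have step2 : ∑ x ∈ (I k) ×ˢ K, Fop g K x
      = ∑ S ∈ (I (k+1)).filter (fun S => (S ∩ K).Nonempty), (PF g S + PF g S) := by
    rw [← Finset.sum_filter_add_sum_filter_not ((I k) ×ˢ K)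
      (fun x => x.2 ∉ x.1 ∧ ∀ w ∈ x.1, ¬ Adj' x.2 w)]
    have hbad : ∑ x ∈ ((I k) ×ˢ K).filter
        (fun x => ¬ (x.2 ∉ x.1 ∧ ∀ w ∈ x.1, ¬ Adj' x.2 w)), Fop g K x = 0 := by
      refine Finset.sum_involution
        (fun x _ =>
          if hC : x.2 ∉ x.1 ∧ (x.1 ∩ K).Nonempty ∧ ∀ w ∈ x.1, Adj' x.2 w → w ∈ K then
            (insert x.2 (x.1.erase ((x.1 ∩ K).min' hC.2.1)), (x.1 ∩ K).min' hC.2.1)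
          else x) ?_ ?_ ?_ ?_
      · -- f a + f (ι a) = 0
        rintro ⟨S, v⟩ hx
        obtain ⟨hxp, hnGd⟩ := Finset.mem_filter.1 hx
        obtain ⟨hSk, hvK⟩ := Finset.mem_product.1 hxp
        have hind := ((hI k S).1 hSk).2
        beta_reduce
        by_cases hC : v ∉ S ∧ (S ∩ K).Nonempty ∧ ∀ w ∈ S, Adj' v w → w ∈ K
        · rw [dif_pos hC]
          obtain ⟨w0, hw0, hmin, hw0K, hw0S, hw0v, hadjw0v, hIndS'', hcard'',
            hSK'', hvE, hFval, hcancel, hFval'', hC''⟩ :=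
            leftover_facts ctx hind hvK hC.1 hC.2.1 hC.2.2
          rw [hmin, hFval, hFval'', hcancel]
          simp only [neg_neg]
          abel
        · rw [dif_neg hC]
          rw [Fop_zero ctx hind hvK hnGd hC]
          simp
      · -- f a ≠ 0 → ι a ≠ a
        rintro ⟨S, v⟩ hx hF0
        obtain ⟨hxp, hnGd⟩ := Finset.mem_filter.1 hx
        obtain ⟨hSk, hvK⟩ := Finset.mem_product.1 hxp
        have hind := ((hI k S).1 hSk).2
        beta_reduce
        by_cases hC : v ∉ S ∧ (S ∩ K).Nonempty ∧ ∀ w ∈ S, Adj' v w → w ∈ K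
        · rw [dif_pos hC]
          obtain ⟨w0, hw0, hmin, hw0K, hw0S, hw0v, hadjw0v, hIndS'', hcard'',
            hSK'', hvE, hFval, hcancel, hFval'', hC''⟩ :=
            leftover_facts ctx hind hvK hC.1 hC.2.1 hC.2.2
          intro heq
          have := congrArg Prod.snd heq
          simp only [hmin] at this
          exact hw0v this
        · exact absurd (Fop_zero ctx hind hvK hnGd hC) hF0
      · -- ι a ∈ s
        rintro ⟨S, v⟩ hx
        obtain ⟨hxp, hnGd⟩ := Finset.mem_filter.1 hx
        obtain ⟨hSk, hvK⟩ := Finset.mem_product.1 hxp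
        have hind := ((hI k S).1 hSk).2
        have hcardx := ((hI k S).1 hSk).1
        beta_reduce
        by_cases hC : v ∉ S ∧ (S ∩ K).Nonempty ∧ ∀ w ∈ S, Adj' v w → w ∈ K
        · rw [dif_pos hC]
          obtain ⟨w0, hw0, hmin, hw0K, hw0S, hw0v, hadjw0v, hIndS'', hcard'',
            hSK'', hvE, hFval, hcancel, hFval'', hC''⟩ :=
            leftover_facts ctx hind hvK hC.1 hC.2.1 hC.2.2
          rw [hmin]
          refine Finset.mem_filter.2 ⟨Finset.mem_product.2 ⟨?_, hw0K⟩, ?_⟩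
          · exact (hI k _).2 ⟨hcard''.trans hcardx, hIndS''⟩
          · intro hGd
            exact hGd.2 v (Finset.mem_insert_self _ _) hadjw0v
        · rw [dif_neg hC]
          exact hx
      · -- ι (ι a) = a
        rintro ⟨S, v⟩ hx
        obtain ⟨hxp, hnGd⟩ := Finset.mem_filter.1 hx
        obtain ⟨hSk, hvK⟩ := Finset.mem_product.1 hxp
        have hind := ((hI k S).1 hSk).2
        beta_reduce
        by_cases hC : v ∉ S ∧ (S ∩ K).Nonempty ∧ ∀ w ∈ S, Adj' v w → w ∈ K
        · obtain ⟨w0, hw0, hmin, hw0K, hw0S, hw0v, hadjw0v, hIndS'', hcard'',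
            hSK'', hvE, hFval, hcancel, hFval'', hC''⟩ :=
            leftover_facts ctx hind hvK hC.1 hC.2.1 hC.2.2
          have hmin'' : ∀ hpf : ((insert v (S.erase w0)) ∩ K).Nonempty,
              ((insert v (S.erase w0)) ∩ K).min' hpf = v := by
            intro hpf
            have h1 := Finset.min'_mem ((insert v (S.erase w0)) ∩ K) hpf
            have h2 : ((insert v (S.erase w0)) ∩ K).min' hpf ∈ ({v} : Finset ℕ) := by
              rw [← hSK'']
              exact h1
            exact Finset.mem_singleton.1 h2
          simp only [dif_pos hC, hmin]
          rw [dif_pos hC'']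
          rw [hmin'', Finset.erase_insert hvE, Finset.insert_erase hw0S]
        · simp only [dif_neg hC]
    rw [hbad, add_zero]
    refine Finset.sum_bij' (fun x _ => insert x.2 x.1)
      (fun S hS => (S.erase ((S ∩ K).min' (Finset.mem_filter.1 hS).2),
        (S ∩ K).min' (Finset.mem_filter.1 hS).2)) ?_ ?_ ?_ ?_ ?_
    · -- maps into target
      rintro ⟨S, v⟩ hx
      obtain ⟨hxp, hGd⟩ := Finset.mem_filter.1 hx
      obtain ⟨hSk, hvK⟩ := Finset.mem_product.1 hxp
      have hind := ((hI k S).1 hSk).2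
      have hcardx := ((hI k S).1 hSk).1
      obtain ⟨hFval, hSK, hindins⟩ := Fop_good ctx hind hvK hGd.1 hGd.2
      beta_reduce
      refine Finset.mem_filter.2 ⟨(hI (k+1) _).2 ⟨?_, hindins⟩,
        ⟨v, Finset.mem_inter.2 ⟨Finset.mem_insert_self _ _, hvK⟩⟩⟩
      rw [Finset.card_insert_of_notMem hGd.1, hcardx]
    · -- maps back
      intro S hS
      obtain ⟨hmem, hne⟩ := Finset.mem_filter.1 hS
      have hind := ((hI _ _).1 hmem).2
      have hcard := ((hI _ _).1 hmem).1
      have hm := Finset.min'_mem (S ∩ K) (Finset.mem_filter.1 hS).2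
      have hmS : (S ∩ K).min' (Finset.mem_filter.1 hS).2 ∈ S := (Finset.mem_inter.1 hm).1
      have hmK : (S ∩ K).min' (Finset.mem_filter.1 hS).2 ∈ K := (Finset.mem_inter.1 hm).2
      refine Finset.mem_filter.2 ⟨Finset.mem_product.2 ⟨?_, hmK⟩, ?_, ?_⟩
      · refine (hI k _).2 ⟨?_, ind_mono hind (Finset.erase_subset _ _)⟩
        rw [Finset.card_erase_of_mem hmS, hcard]
        omega
      · exact Finset.notMem_erase _ _
      · intro w hw hadj
        exact hind.2 _ hmS w (Finset.mem_of_mem_erase hw)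
          (Ne.symm (Finset.ne_of_mem_erase hw)) hadj
    · -- left inverse
      rintro ⟨S, v⟩ hx
      obtain ⟨hxp, hGd⟩ := Finset.mem_filter.1 hx
      obtain ⟨hSk, hvK⟩ := Finset.mem_product.1 hxp
      have hind := ((hI k S).1 hSk).2
      obtain ⟨hFval, hSK, hindins⟩ := Fop_good ctx hind hvK hGd.1 hGd.2
      have hik : (insert v S) ∩ K = {v} := by
        ext z
        simp only [Finset.mem_inter, Finset.mem_insert, Finset.mem_singleton]
        constructor
        · rintro ⟨hz1 | hz1, hzK⟩
          · exact hz1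
          · exact absurd (Finset.mem_inter.2 ⟨hz1, hzK⟩) (by rw [hSK]; simp)
        · rintro rfl
          exact ⟨Or.inl rfl, hvK⟩
      have hm' : ∀ hpf : ((insert v S) ∩ K).Nonempty,
          ((insert v S) ∩ K).min' hpf = v := by
        intro hpf
        have h1 := Finset.min'_mem ((insert v S) ∩ K) hpf
        have h2 : ((insert v S) ∩ K).min' hpf ∈ ({v} : Finset ℕ) := by
          rw [← hik]
          exact h1
        exact Finset.mem_singleton.1 h2
      beta_reduce
      rw [hm', Finset.erase_insert hGd.1]
    · -- right inverse
      intro S hS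
      have hm := Finset.min'_mem (S ∩ K) (Finset.mem_filter.1 hS).2
      exact Finset.insert_erase (Finset.mem_inter.1 hm).1
    · -- values
      rintro ⟨S, v⟩ hx
      obtain ⟨hxp, hGd⟩ := Finset.mem_filter.1 hx
      obtain ⟨hSk, hvK⟩ := Finset.mem_product.1 hxp
      have hind := ((hI k S).1 hSk).2
      beta_reduce
      exact (Fop_good ctx hind hvK hGd.1 hGd.2).1
  rw [step1, step3, ← Finset.sum_mul, ← Finset.sum_mul, step2]

end FFDAux2

namespace FFD

variable {A : Type*} [Ring A] [Algebra ℂ A]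

/-- Index pattern for which the extra generator `ħ_{2m+1}` (with parameter `m`)
anticommutes with the plain generator `h l`. -/
def MixedRel (m l : ℤ) : Prop :=
  l = 2 * m - 5 ∨ l = 2 * m - 3 ∨ l = 2 * m - 1 ∨ l = 2 * m + 1 ∨ l = 2 * m ∨ l = 2 * m + 2

/-- Vertex codes of the frustration graph: the even code `2 * i` encodes the plain vertex `i`
(generator `h i`), the odd code `2 * m + 1` encodes the barred vertex `2m+1` (generator
`ħ_{2m+1}`).  Two codes are adjacent exactly when the corresponding generators anticommute. -/
def Adj (v w : ℕ) : Prop :=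
  if v % 2 = 0 then
    if w % 2 = 0 then
      1 ≤ |((v / 2 : ℕ) : ℤ) - ((w / 2 : ℕ) : ℤ)| ∧
        |((v / 2 : ℕ) : ℤ) - ((w / 2 : ℕ) : ℤ)| ≤ 2
    else MixedRel ((w / 2 : ℕ) : ℤ) ((v / 2 : ℕ) : ℤ)
  else
    if w % 2 = 0 then MixedRel ((v / 2 : ℕ) : ℤ) ((w / 2 : ℕ) : ℤ)
    else |((v / 2 : ℕ) : ℤ) - ((w / 2 : ℕ) : ℤ)| = 1

/-- The vertex set of the frustration graph `G n`: plain vertices `1, …, n` and barred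
vertices `2m+1` for `0 ≤ m ≤ ⌊n/2⌋`. -/
def memG (n v : ℕ) : Prop :=
  if v % 2 = 0 then 1 ≤ v / 2 ∧ v / 2 ≤ n else v / 2 ≤ n / 2

/-- The generator attached to a vertex code. -/
def gen (h hb : ℤ → A) (v : ℕ) : A :=
  if v % 2 = 0 then h ((v / 2 : ℕ) : ℤ) else hb ((v / 2 : ℕ) : ℤ)

/-- The product `h_S` of the generators of a set of vertex codes, taken in increasing order
of the codes (for an independent set the factors pairwise commute, so the order is
immaterial). -/
def prodGen (h hb : ℤ → A) (S : Finset ℕ) : A :=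
  ((S.sort (· ≤ ·)).map (gen h hb)).prod

/-- The finite collection of all independent sets of cardinality `k` of `G n`. -/
noncomputable def indepSets (n k : ℕ) : Finset (Finset ℕ) :=
  @Finset.filter _
    (fun S => S.card = k ∧ (∀ v ∈ S, memG n v) ∧ ∀ v ∈ S, ∀ w ∈ S, v ≠ w → ¬Adj v w)
    (fun _ => Classical.propDecidable _)
    (Finset.range (2 * n + 2)).powerset

/-- The charge `Q_n^{(k)}`, with the conventions `Q_n^{(0)} = 1`, `Q_n^{(k)} = 0` for `k < 0`,
and `Q_n^{(k)} = 0` for `n < 0`, `k > 0`. -/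
noncomputable def Q (h hb : ℤ → A) (n k : ℤ) : A :=
  if k < 0 then 0
  else if n < 0 then (if k = 0 then 1 else 0)
  else ∑ S ∈ indepSets n.toNat k.toNat, prodGen h hb S

/-- The transfer matrix `T_n(u) = ∑_{k ≥ 0} (-u)^k Q_n^{(k)}` (a finite sum, since
`Q_n^{(k)} = 0` whenever `k` exceeds the number of vertices of `G n`), with `T_n(u) = 1`
for `n ≤ 0`. -/
noncomputable def T (h hb : ℤ → A) (n : ℤ) (u : ℂ) : A :=
  if n ≤ 0 then 1
  else ∑ k ∈ Finset.range (2 * n.toNat + 3), (-u) ^ k • Q h hb n (k : ℤ)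

/-- `A_{2m-1} = h_{2m} h_{2m-3} + h_{2m-2} ħ_{2m+1}`. -/
def AOp (h hb : ℤ → A) (m : ℤ) : A :=
  h (2 * m) * h (2 * m - 3) + h (2 * m - 2) * hb m

/-- `C_{2m} = h_{2m-3} ħ_{2m+3}`. -/
def COp (h hb : ℤ → A) (m : ℤ) : A := h (2 * m - 3) * hb (m + 1)

/-- `𝕊_{2m} = h_{2m-1} + h_{2m} + ħ_{2m+1}`. -/
def SOp (h hb : ℤ → A) (m : ℤ) : A := h (2 * m - 1) + h (2 * m) + hb m

/-- The defining relations of the extended FFD algebra with generators `h_1, …, h_M` and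
`ħ_{2m+1} = hb m` for `0 ≤ m ≤ ⌊M/2⌋`. -/
structure FFDHyp (M : ℤ) (h hb : ℤ → A) (b bb : ℤ → ℂ) : Prop where
  hsq : ∀ m, 1 ≤ m → m ≤ M → h m * h m = (b m) ^ 2 • (1 : A)
  hanti : ∀ m l, 1 ≤ m → m ≤ M → 1 ≤ l → l ≤ M → 1 ≤ |m - l| → |m - l| ≤ 2 →
    h m * h l = -(h l * h m)
  hcomm : ∀ m l, 1 ≤ m → m ≤ M → 1 ≤ l → l ≤ M → 2 < |m - l| →
    h m * h l = h l * h m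
  hbsq : ∀ m, 0 ≤ m → m ≤ M / 2 → hb m * hb m = (bb m) ^ 2 • (1 : A)
  hbanti : ∀ m l, 0 ≤ m → m ≤ M / 2 → 1 ≤ l → l ≤ M → MixedRel m l →
    hb m * h l = -(h l * hb m)
  hbcomm : ∀ m l, 0 ≤ m → m ≤ M / 2 → 1 ≤ l → l ≤ M → ¬MixedRel m l →
    hb m * h l = h l * hb m
  hbbanti : ∀ m m', 0 ≤ m → m ≤ M / 2 → 0 ≤ m' → m' ≤ M / 2 → |m - m'| = 1 →
    hb m * hb m' = -(hb m' * hb m)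
  hbbcomm : ∀ m m', 0 ≤ m → m ≤ M / 2 → 0 ≤ m' → m' ≤ M / 2 → m ≠ m' → |m - m'| ≠ 1 →
    hb m * hb m' = hb m' * hb m

/-- The extra relation `A_{2m-1} C_{2m+2} = C_{2m} A_{2m+3}` for all `1 < m < ⌊M/2⌋ - 1`. -/
def ACRel (M : ℤ) (h hb : ℤ → A) : Prop :=
  ∀ m : ℤ, 1 < m → m < M / 2 - 1 →
    AOp h hb m * COp h hb (m + 1) = COp h hb m * AOp h hb (m + 2)

/-- The assumption that the products around the even holes are the scalars `μ_{2m-1}`. -/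
def MuScalar (M : ℤ) (h hb : ℤ → A) (μ : ℤ → ℂ) : Prop :=
  ∀ m : ℤ, 1 < m → m ≤ M / 2 →
    h (2 * m - 3) * h (2 * m) * h (2 * m - 2) * hb m = μ m • (1 : A)

/-- The assumption that `𝕊_{2m}²`, `A_{2m-1}²`, `C_{2m}²` are the scalars `s_{2m}`,
`a_{2m-1}`, `c_{2m}` times the identity, the coefficients attached to generators of
non-positive index being set to zero. -/
structure ScalarSquares (M : ℤ) (h hb : ℤ → A) (s a c : ℤ → ℂ) : Prop where
  hs : ∀ m : ℤ, 1 ≤ m → 2 * m ≤ M → SOp h hb m * SOp h hb m = s (2 * m) • (1 : A)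
  hszero : ∀ m : ℤ, m ≤ 0 → s (2 * m) = 0
  ha : ∀ m : ℤ, 2 ≤ m → 2 * m ≤ M → AOp h hb m * AOp h hb m = a (2 * m - 1) • (1 : A)
  hazero : ∀ m : ℤ, m ≤ 1 → a (2 * m - 1) = 0
  hc : ∀ m : ℤ, 2 ≤ m → 2 * m + 2 ≤ M → COp h hb m * COp h hb m = c (2 * m) • (1 : A)
  hczero : ∀ m : ℤ, m ≤ 1 → c (2 * m) = 0

/-- The explicitly defined polynomial sequence `P_n(z)`:
`P_n = 1` for `n ≤ 0`, `P_{2m-1}(z) = P_{2m-2}(z) - b_{2m-1}² z P_{2m-4}(z)` and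
`P_{2m}(z) = P_{2m-2}(z) - s_{2m} z P_{2m-4}(z) + a_{2m-1} z² P_{2m-6}(z)
- c_{2m-2} z² P_{2m-8}(z)`. -/
structure PolyRec (b s a c : ℤ → ℂ) (P : ℤ → ℂ → ℂ) : Prop where
  base : ∀ n : ℤ, n ≤ 0 → ∀ z : ℂ, P n z = 1
  odd : ∀ m : ℤ, 1 ≤ m → ∀ z : ℂ, P (2 * m - 1) z =
    P (2 * m - 2) z - (b (2 * m - 1)) ^ 2 * z * P (2 * m - 4) z
  even : ∀ m : ℤ, 1 ≤ m → ∀ z : ℂ, P (2 * m) z =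
    P (2 * m - 2) z - s (2 * m) * z * P (2 * m - 4) z
      + a (2 * m - 1) * z ^ 2 * P (2 * m - 6) z
      - c (2 * m - 2) * z ^ 2 * P (2 * m - 8) z

/-- `r_M`: equal to `1` for odd `M` and to `2` for even `M`. -/
def rM (M : ℤ) : ℤ := if M % 2 = 1 then 1 else 2

/-- The sum `𝕊` of the generators of the right-end simplicial clique:
`h_M` for odd `M`, and `h_{M-1} + h_M + ħ_{M+1}` for even `M`. -/
def SEdge (M : ℤ) (h hb : ℤ → A) : A :=
  if M % 2 = 1 then h M else h (M - 1) + h M + hb (M / 2)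

/-- The right-end simplicial mode `χ`: it squares to `1`, anticommutes with the generators
of the right-end simplicial clique and commutes with all the other generators. -/
structure EdgeMode (M : ℤ) (h hb : ℤ → A) (χ : A) : Prop where
  sq : χ * χ = 1
  odd : M % 2 = 1 →
    (χ * h M = -(h M * χ)) ∧
    (∀ l : ℤ, 1 ≤ l → l < M → χ * h l = h l * χ) ∧
    (∀ m : ℤ, 0 ≤ m → m ≤ M / 2 → χ * hb m = hb m * χ)
  even : M % 2 = 0 →
    (χ * h (M - 1) = -(h (M - 1) * χ)) ∧
    (χ * h M = -(h M * χ)) ∧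
    (χ * hb (M / 2) = -(hb (M / 2) * χ)) ∧
    (∀ l : ℤ, 1 ≤ l → l ≤ M - 2 → χ * h l = h l * χ) ∧
    (∀ m : ℤ, 0 ≤ m → m < M / 2 → χ * hb m = hb m * χ)


section MasterProof

open FFDAux FFDAux2

/-- omega-friendly arithmetic form of the adjacency relation. -/
lemma adj_omega (v w : ℕ) : Adj v w ↔
    (v % 2 = 0 ∧ w % 2 = 0 ∧ 1 ≤ (((v / 2 : ℕ) : ℤ) - ((w / 2 : ℕ) : ℤ)).natAbs ∧
      (((v / 2 : ℕ) : ℤ) - ((w / 2 : ℕ) : ℤ)).natAbs ≤ 2) ∨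
    (v % 2 = 0 ∧ w % 2 = 1 ∧ MixedRel ((w / 2 : ℕ) : ℤ) ((v / 2 : ℕ) : ℤ)) ∨
    (v % 2 = 1 ∧ w % 2 = 0 ∧ MixedRel ((v / 2 : ℕ) : ℤ) ((w / 2 : ℕ) : ℤ)) ∨
    (v % 2 = 1 ∧ w % 2 = 1 ∧
      (((v / 2 : ℕ) : ℤ) - ((w / 2 : ℕ) : ℤ)).natAbs = 1) := by
  have hv : v % 2 = 0 ∨ v % 2 = 1 := by omega
  have hw : w % 2 = 0 ∨ w % 2 = 1 := by omega
  unfold Adj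
  rcases hv with hv | hv <;> rcases hw with hw | hw <;>
    simp only [hv, hw, reduceIte, one_ne_zero, false_and, and_false, or_false,
      false_or, true_and, zero_ne_one] <;>
    (rw [Int.abs_eq_natAbs]; omega)

lemma memG_iff {n v : ℕ} : memG n v ↔
    (v % 2 = 0 ∧ 1 ≤ v / 2 ∧ v / 2 ≤ n) ∨ (v % 2 = 1 ∧ v / 2 ≤ n / 2) := by
  unfold memG
  split_ifs with h <;> omega

/-- the vertex set of `G n` as an explicit finset. -/
def Vset (n : ℕ) : Finset ℕ := (Finset.range (2 * n + 2)).filter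
  (fun v => (v % 2 = 0 ∧ 1 ≤ v / 2 ∧ v / 2 ≤ n) ∨ (v % 2 = 1 ∧ v / 2 ≤ n / 2))

lemma mem_Vset {n v : ℕ} : v ∈ Vset n ↔ memG n v := by
  rw [Vset, Finset.mem_filter, Finset.mem_range, memG_iff]
  constructor
  · exact fun h => h.2
  · intro h
    exact ⟨by omega, h⟩

/-- the right-end simplicial clique. -/
def Kset (M : ℤ) : Finset ℕ :=
  if M % 2 = 1 then {2 * M.toNat} else {2 * (M.toNat - 1), 2 * M.toNat, M.toNat + 1}

lemma gen_even {A : Type*} [Ring A] [Algebra ℂ A] (h hb : ℤ → A) (i : ℕ) :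
    gen h hb (2 * i) = h (i : ℤ) := by
  have h1 : (2 * i) % 2 = 0 := by omega
  have h3 : (2 * i) / 2 = i := by omega
  simp [gen, h1, h3]

lemma gen_odd {A : Type*} [Ring A] [Algebra ℂ A] (h hb : ℤ → A) (m : ℕ) :
    gen h hb (2 * m + 1) = hb (m : ℤ) := by
  have h1 : ¬ ((2 * m + 1) % 2 = 0) := by omega
  have h3 : (2 * m + 1) / 2 = m := by omega
  simp [gen, h1, h3]

lemma memG_cases {n v : ℕ} (hv : memG n v) :
    (∃ i, v = 2 * i ∧ 1 ≤ i ∧ i ≤ n) ∨ (∃ m, v = 2 * m + 1 ∧ m ≤ n / 2) := by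
  rw [memG_iff] at hv
  rcases hv with h | h
  · exact Or.inl ⟨v / 2, by omega, by omega, by omega⟩
  · exact Or.inr ⟨v / 2, by omega, by omega⟩

lemma adj_ee (i j : ℕ) : Adj (2 * i) (2 * j) ↔
    (1 ≤ |(i : ℤ) - (j : ℤ)| ∧ |(i : ℤ) - (j : ℤ)| ≤ 2) := by
  have h1 : (2 * i) % 2 = 0 := by omega
  have h2 : (2 * j) % 2 = 0 := by omega
  have h3 : (2 * i) / 2 = i := by omega
  have h4 : (2 * j) / 2 = j := by omega
  rw [adj_omega]
  simp only [h1, h2, h3, h4, true_and, and_true, zero_ne_one, one_ne_zero,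
    false_and, and_false, or_false, false_or]
  rw [Int.abs_eq_natAbs]
  omega

lemma adj_eo (i m : ℕ) : Adj (2 * i) (2 * m + 1) ↔ MixedRel (m : ℤ) (i : ℤ) := by
  rw [adj_omega]
  have h1 : (2 * i) % 2 = 0 := by omega
  have h2 : (2 * m + 1) % 2 = 1 := by omega
  have h3 : (2 * i) / 2 = i := by omega
  have h4 : (2 * m + 1) / 2 = m := by omega
  simp only [h1, h2, h3, h4, true_and, and_true, zero_ne_one, one_ne_zero,
    false_and, and_false, or_false, false_or]

lemma adj_oe (m i : ℕ) : Adj (2 * m + 1) (2 * i) ↔ MixedRel (m : ℤ) (i : ℤ) := by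
  rw [adj_omega]
  have h1 : (2 * i) % 2 = 0 := by omega
  have h2 : (2 * m + 1) % 2 = 1 := by omega
  have h3 : (2 * i) / 2 = i := by omega
  have h4 : (2 * m + 1) / 2 = m := by omega
  simp [h1, h2, h3, h4]

lemma adj_oo (m m' : ℕ) : Adj (2 * m + 1) (2 * m' + 1) ↔
    |(m : ℤ) - (m' : ℤ)| = 1 := by
  have h2 : (2 * m + 1) % 2 = 1 := by omega
  have h2' : (2 * m' + 1) % 2 = 1 := by omega
  have h4 : (2 * m + 1) / 2 = m := by omega
  have h4' : (2 * m' + 1) / 2 = m' := by omega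
  rw [adj_omega]
  simp only [h2, h2', h4, h4', true_and, and_true, zero_ne_one, one_ne_zero,
    false_and, and_false, or_false, false_or]
  rw [Int.abs_eq_natAbs]
  omega

set_option maxHeartbeats 1000000 in
/-- the frustration-graph context delivered by the algebra relations. -/
lemma master_ctx {A : Type*} [Ring A] [Algebra ℂ A]
    (M : ℤ) (hM : 4 ≤ M) (h hb : ℤ → A) (b bb : ℤ → ℂ)
    (hyp : FFDHyp M h hb b bb) (χ : A) (hχ : EdgeMode M h hb χ) :
    FFDAux2.Ctx (gen h hb) Adj (Vset M.toNat) (Kset M) χ := by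
  have hn : ((M.toNat : ℕ) : ℤ) = M := Int.toNat_of_nonneg (by omega)
  set n := M.toNat with hndef
  have hn4 : 4 ≤ n := by omega
  have hpar : M % 2 = 1 ∨ M % 2 = 0 := by omega
  have hKodd : M % 2 = 1 → Kset M = {2 * n} := fun hp => if_pos hp
  have hKeven : M % 2 = 0 → Kset M = {2 * (n - 1), 2 * n, n + 1} := by
    intro hp
    exact if_neg (by omega)
  constructor
  · -- symm
    intro v w hvw
    unfold Adj at hvw ⊢
    by_cases hv : v % 2 = 0 <;> by_cases hw : w % 2 = 0 <;>
      simp only [hv, hw, reduceIte, if_true, if_false] at hvw ⊢ <;>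
      first
        | (rw [abs_sub_comm]; exact hvw)
        | exact hvw
        | (simp only [if_neg hv, if_neg hw] at hvw ⊢; rw [abs_sub_comm]; exact hvw)
  · -- irrefl
    intro v hvv
    unfold Adj at hvv
    by_cases hv : v % 2 = 0 <;>
      simp [hv, sub_self] at hvv
  · -- anti
    intro v hv w hw hadj
    rw [mem_Vset] at hv hw
    rcases memG_cases hv with ⟨i, rfl, hi1, hi2⟩ | ⟨m, rfl, hm⟩ <;>
      rcases memG_cases hw with ⟨j, rfl, hj1, hj2⟩ | ⟨m', rfl, hm'⟩
    · rw [adj_ee] at hadj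
      rw [gen_even, gen_even]
      exact hyp.hanti i j (by omega) (by omega) (by omega) (by omega) hadj.1 hadj.2
    · rw [adj_eo] at hadj
      rw [gen_even, gen_odd]
      exact flip_eq_neg (hyp.hbanti m' i (by omega) (by omega) (by omega) (by omega) hadj)
    · rw [adj_oe] at hadj
      rw [gen_odd, gen_even]
      exact hyp.hbanti m j (by omega) (by omega) (by omega) (by omega) hadj
    · rw [adj_oo] at hadj
      rw [gen_odd, gen_odd]
      exact hyp.hbbanti m m' (by omega) (by omega) (by omega) (by omega) hadj
  · -- comm
    intro v hv w hw hne hnadj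
    rw [mem_Vset] at hv hw
    rcases memG_cases hv with ⟨i, rfl, hi1, hi2⟩ | ⟨m, rfl, hm⟩ <;>
      rcases memG_cases hw with ⟨j, rfl, hj1, hj2⟩ | ⟨m', rfl, hm'⟩
    · rw [adj_ee, Int.abs_eq_natAbs] at hnadj
      rw [gen_even, gen_even]
      refine hyp.hcomm i j (by omega) (by omega) (by omega) (by omega) ?_
      rw [Int.abs_eq_natAbs]
      omega
    · rw [adj_eo] at hnadj
      rw [gen_even, gen_odd]
      exact (hyp.hbcomm m' i (by omega) (by omega) (by omega) (by omega) hnadj).symm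
    · rw [adj_oe] at hnadj
      rw [gen_odd, gen_even]
      exact hyp.hbcomm m j (by omega) (by omega) (by omega) (by omega) hnadj
    · rw [adj_oo, Int.abs_eq_natAbs] at hnadj
      rw [gen_odd, gen_odd]
      refine hyp.hbbcomm m m' (by omega) (by omega) (by omega) (by omega) (by omega) ?_
      rw [Int.abs_eq_natAbs]
      omega
  · -- KV
    intro v hv
    rw [mem_Vset, memG_iff]
    rcases hpar with hp | hp
    · rw [hKodd hp] at hv
      simp only [Finset.mem_singleton] at hv
      omega
    · rw [hKeven hp] at hv
      simp only [Finset.mem_insert, Finset.mem_singleton] at hv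
      omega
  · -- clique
    intro v hv w hw hne
    rcases hpar with hp | hp
    · rw [hKodd hp] at hv hw
      simp only [Finset.mem_singleton] at hv hw
      exact absurd (hv.trans hw.symm) hne
    · rw [hKeven hp] at hv hw
      simp only [Finset.mem_insert, Finset.mem_singleton] at hv hw
      have he : n + 1 = 2 * (n / 2) + 1 := by omega
      rcases hv with rfl | rfl | rfl <;> rcases hw with rfl | rfl | rfl <;>
        first
          | exact absurd rfl hne
          | (try rw [he]
             simp only [adj_ee, adj_eo, adj_oe, adj_oo, MixedRel, Int.abs_eq_natAbs]
             omega)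
  · -- simplicial property
    intro v hv w1 hw1 w2 hw2 hk1 hk2 hne h1 h2
    rw [mem_Vset] at hw1 hw2
    rcases hpar with hp | hp
    · rw [hKodd hp] at hv hk1 hk2
      simp only [Finset.mem_singleton] at hv hk1 hk2
      subst hv
      rcases memG_cases hw1 with ⟨i, rfl, hi1, hi2⟩ | ⟨m, rfl, hm⟩ <;>
        rcases memG_cases hw2 with ⟨j, rfl, hj1, hj2⟩ | ⟨m', rfl, hm'⟩ <;>
        (simp only [adj_ee, adj_eo, adj_oe, adj_oo, MixedRel,
          Int.abs_eq_natAbs] at h1 h2 ⊢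
         omega)
    · rw [hKeven hp] at hv hk1 hk2
      simp only [Finset.mem_insert, Finset.mem_singleton, not_or] at hv hk1 hk2
      have he : n + 1 = 2 * (n / 2) + 1 := by omega
      rcases hv with rfl | rfl | rfl <;>
        (try rw [he] at h1 h2) <;>
        rcases memG_cases hw1 with ⟨i, rfl, hi1, hi2⟩ | ⟨m, rfl, hm⟩ <;>
        rcases memG_cases hw2 with ⟨j, rfl, hj1, hj2⟩ | ⟨m', rfl, hm'⟩ <;>
        (simp only [adj_ee, adj_eo, adj_oe, adj_oo, MixedRel,
          Int.abs_eq_natAbs] at h1 h2 ⊢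
         omega)
  · -- chiK
    intro v hv
    rcases hpar with hp | hp
    · rw [hKodd hp] at hv
      simp only [Finset.mem_singleton] at hv
      subst hv
      rw [gen_even, hn]
      exact (hχ.odd hp).1
    · rw [hKeven hp] at hv
      simp only [Finset.mem_insert, Finset.mem_singleton] at hv
      obtain ⟨he1, he2, he3, _, _⟩ := hχ.even hp
      rcases hv with rfl | rfl | rfl
      · rw [gen_even, show ((n - 1 : ℕ) : ℤ) = M - 1 by omega]
        exact he1
      · rw [gen_even, hn]
        exact he2
      · rw [show n + 1 = 2 * (n / 2) + 1 by omega, gen_odd,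
          show ((n / 2 : ℕ) : ℤ) = M / 2 by omega]
        exact he3
  · -- chiV
    intro v hv hvK
    rw [mem_Vset] at hv
    rcases hpar with hp | hp
    · rw [hKodd hp] at hvK
      simp only [Finset.mem_singleton] at hvK
      obtain ⟨_, ho2, ho3⟩ := hχ.odd hp
      rcases memG_cases hv with ⟨i, rfl, hi1, hi2⟩ | ⟨m, rfl, hm⟩
      · rw [gen_even]
        exact ho2 i (by omega) (by omega)
      · rw [gen_odd]
        exact ho3 m (by omega) (by omega)
    · rw [hKeven hp] at hvK
      simp only [Finset.mem_insert, Finset.mem_singleton, not_or] at hvK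
      obtain ⟨_, _, _, he4, he5⟩ := hχ.even hp
      rcases memG_cases hv with ⟨i, rfl, hi1, hi2⟩ | ⟨m, rfl, hm⟩
      · rw [gen_even]
        exact he4 i (by omega) (by omega)
      · rw [gen_odd]
        exact he5 m (by omega) (by omega)

lemma mem_indepSets {n k : ℕ} {S : Finset ℕ} :
    S ∈ indepSets n k ↔ S.card = k ∧ FFDAux2.Ind Adj (Vset n) S := by
  classical
  unfold indepSets FFDAux2.Ind
  simp only [Finset.mem_filter, Finset.mem_powerset]
  constructor
  · rintro ⟨hsub, hcard, hmem, hind⟩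
    exact ⟨hcard, fun v hv => mem_Vset.2 (hmem v hv), hind⟩
  · rintro ⟨hcard, hmemV, hind⟩
    refine ⟨?_, hcard, fun v hv => mem_Vset.1 (hmemV v hv), hind⟩
    intro v hv
    have hmg := mem_Vset.1 (hmemV v hv)
    rw [memG_iff] at hmg
    rw [Finset.mem_range]
    omega

lemma indepSets_zero (n : ℕ) : indepSets n 0 = {∅} := by
  ext S
  rw [mem_indepSets, Finset.mem_singleton]
  constructor
  · rintro ⟨hcard, _⟩
    exact Finset.card_eq_zero.1 hcard
  · rintro rfl
    exact ⟨rfl, fun v hv => absurd hv (Finset.notMem_empty v),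
      fun v hv => absurd hv (Finset.notMem_empty v)⟩

lemma indepSets_top (n : ℕ) : indepSets n (2 * n + 3) = ∅ := by
  rw [Finset.eq_empty_iff_forall_notMem]
  intro S hS
  rw [mem_indepSets] at hS
  have hsub : S ⊆ Finset.range (2 * n + 2) := by
    intro v hv
    have hmg := mem_Vset.1 (hS.2.1 v hv)
    rw [memG_iff] at hmg
    rw [Finset.mem_range]
    omega
  have := Finset.card_le_card hsub
  rw [Finset.card_range, hS.1] at this
  omega

lemma sedge_sum {A : Type*} [Ring A] [Algebra ℂ A]
    (M : ℤ) (hM : 4 ≤ M) (h hb : ℤ → A) :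
    SEdge M h hb = ∑ v ∈ Kset M, gen h hb v := by
  have hn : ((M.toNat : ℕ) : ℤ) = M := Int.toNat_of_nonneg (by omega)
  set n := M.toNat with hndef
  have hn4 : 4 ≤ n := by omega
  have hpar : M % 2 = 1 ∨ M % 2 = 0 := by omega
  rcases hpar with hp | hp
  · rw [SEdge, if_pos hp, Kset, if_pos hp, Finset.sum_singleton, gen_even, hn]
  · have hne1 : (2 * (n - 1) : ℕ) ≠ 2 * n := by omega
    have hne2 : (2 * (n - 1) : ℕ) ≠ n + 1 := by omega
    have hne3 : (2 * n : ℕ) ≠ n + 1 := by omega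
    rw [SEdge, if_neg (by omega), Kset, if_neg (by omega)]
    rw [show ({2 * (n - 1), 2 * n, n + 1} : Finset ℕ)
        = insert (2 * (n - 1)) (insert (2 * n) {n + 1}) from rfl]
    rw [Finset.sum_insert (by simp [hne1, hne2]),
      Finset.sum_insert (by simp [hne3]), Finset.sum_singleton]
    rw [gen_even, gen_even, hn, show ((n - 1 : ℕ) : ℤ) = M - 1 by omega,
      show n + 1 = 2 * (n / 2) + 1 by omega, gen_odd,
      show ((n / 2 : ℕ) : ℤ) = M / 2 by omega, add_assoc]

end MasterProof

/-- The master relation: for every `u ∈ ℂ`,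
`T_M(u) (χ + u 𝕊 χ) = (χ - u 𝕊 χ) T_M(u)`. -/
theorem master_relation
    {A : Type*} [Ring A] [Algebra ℂ A]
    (M : ℤ) (hM : 4 ≤ M) (h hb : ℤ → A) (b bb : ℤ → ℂ)
    (hyp : FFDHyp M h hb b bb) (hac : ACRel M h hb)
    (χ : A) (hχ : EdgeMode M h hb χ) :
    ∀ u : ℂ,
      T h hb M u * (χ + u • (SEdge M h hb * χ))
        = (χ - u • (SEdge M h hb * χ)) * T h hb M u := by
  intro u
  have hn : ((M.toNat : ℕ) : ℤ) = M := Int.toNat_of_nonneg (by omega)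
  set n := M.toNat with hndef
  have hctx := master_ctx M hM h hb b bb hyp χ hχ
  have hI : ∀ (k : ℕ) (S : Finset ℕ), S ∈ indepSets n k ↔
      S.card = k ∧ FFDAux2.Ind Adj (Vset n) S := fun k S => mem_indepSets
  have hT : T h hb M u
      = ∑ k ∈ Finset.range (2 * n + 3), (-u) ^ k • Q h hb M (k : ℤ) := by
    unfold T
    rw [if_neg (by omega)]
  set X : A := SEdge M h hb * χ with hX
  set Qk : ℕ → A := fun k => ∑ S ∈ indepSets n k, FFDAux.PF (gen h hb) S with hQk
  have hQ : ∀ k : ℕ, Q h hb M (k : ℤ) = Qk k := by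
    intro k
    unfold Q
    rw [if_neg (by omega), if_neg (by omega)]
    simp only [Int.toNat_natCast]
    rfl
  have hkey : ∀ k : ℕ, Qk (k + 1) * χ - χ * Qk (k + 1) = Qk k * X + X * Qk k := by
    intro k
    rw [hX, sedge_sum M hM h hb]
    exact FFDAux2.key_identity hctx (fun k => indepSets n k) hI k
  set f : ℕ → A := fun k => (-u) ^ k • (Qk k * χ - χ * Qk k) with hf
  have hQ0 : Qk 0 = 1 := by
    rw [hQk]
    simp only [indepSets_zero]
    simp [FFDAux.PF]
  have hQN : Qk (2 * n + 3) = 0 := by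
    rw [hQk]
    simp only [indepSets_top]
    simp
  rw [← sub_eq_zero, hT]
  have expand : (∑ k ∈ Finset.range (2 * n + 3), (-u) ^ k • Q h hb M (k : ℤ))
        * (χ + u • X)
      - (χ - u • X) * (∑ k ∈ Finset.range (2 * n + 3), (-u) ^ k • Q h hb M (k : ℤ))
      = ∑ k ∈ Finset.range (2 * n + 3), (f k - f (k + 1)) := by
    rw [Finset.sum_mul, Finset.mul_sum, ← Finset.sum_sub_distrib]
    refine Finset.sum_congr rfl ?_
    intro k hk
    rw [hQ k, hf]
    simp only []
    rw [hkey k]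
    simp only [mul_add, mul_sub, sub_mul, add_mul, smul_mul_assoc, mul_smul_comm,
      smul_add, smul_sub, smul_smul, pow_succ]
    module
  rw [expand, Finset.sum_range_sub' f, hf]
  simp only [hQ0, hQN]
  simp

end FFD
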